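/- For each integer $K\ge 2$, let $C_K=\sum_{i=1}^{K}\frac{1}{i}$ and consider the Zipf distribution $p_K(i)=(C_K i)^{-1}$ for $1\le i\le K$. Then Shannon's entropy $H_K=-\sum_{i=1}^{K}p_K(i)\ln p_K(i)$ satisfies $H_K \sim \frac{1}{2}\ln K$ as $K\to\infty$, i.e. $\lim_{K\to\infty} H_K/\ln K = 1/2$. -/

import Mathlib

open Filter

/-- The harmonic normalizing constant `C_K = ∑_{i=1}^K 1/i`. -/
noncomputable def harmonicC (K : ℕ) : ℝ := ∑ i ∈ Finset.Icc 1 K, (1 : ℝ) / i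

/-- The Zipf distribution `p_K(i) = (C_K i)⁻¹`, `1 ≤ i ≤ K`. -/
noncomputable def zipfP (K i : ℕ) : ℝ := (harmonicC K * i)⁻¹

/-- Shannon's entropy `H_K = −∑_i p_K(i) ln p_K(i)` of the Zipf distribution. -/
noncomputable def zipfEntropy (K : ℕ) : ℝ :=
  -∑ i ∈ Finset.Icc 1 K, zipfP K i * Real.log (zipfP K i)

noncomputable def zS (K : ℕ) : ℝ := ∑ i ∈ Finset.Icc 1 K, Real.log i / i

lemma harmonicC_eq (K : ℕ) : harmonicC K = (harmonic K : ℝ) := by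
  rw [harmonicC, harmonic_eq_sum_Icc]
  push_cast
  simp [one_div]

lemma one_le_harmonicC {K : ℕ} (hK : 1 ≤ K) : 1 ≤ harmonicC K := by
  have := Finset.single_le_sum (f := fun i : ℕ => (1 : ℝ) / i)
    (fun i _ => by positivity) (Finset.mem_Icc.mpr ⟨le_refl 1, hK⟩)
  simpa [harmonicC] using this

lemma harmonicC_pos {K : ℕ} (hK : 1 ≤ K) : 0 < harmonicC K :=
  lt_of_lt_of_le one_pos (one_le_harmonicC hK)

lemma harmonicC_le (K : ℕ) : harmonicC K ≤ 1 + Real.log K := by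
  rw [harmonicC_eq]; exact_mod_cast harmonic_le_one_add_log K

lemma le_harmonicC (K : ℕ) : Real.log (K + 1) ≤ harmonicC K := by
  rw [harmonicC_eq]
  have := log_add_one_le_harmonic K
  push_cast at this ⊢
  exact this

lemma entropy_eq {K : ℕ} (hK : 1 ≤ K) :
    zipfEntropy K = Real.log (harmonicC K) + zS K / harmonicC K := by
  have hC := harmonicC_pos hK
  have key : ∀ i ∈ Finset.Icc 1 K, zipfP K i * Real.log (zipfP K i)
      = -(Real.log (harmonicC K) * ((1:ℝ)/i) / harmonicC K + (Real.log i / i) / harmonicC K) := by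
    intro i hi
    have hi1 : 1 ≤ i := (Finset.mem_Icc.mp hi).1
    have hipos : (0:ℝ) < i := by exact_mod_cast hi1
    rw [zipfP, Real.log_inv, Real.log_mul hC.ne' hipos.ne']
    field_simp
  rw [zipfEntropy, Finset.sum_congr rfl key, Finset.sum_neg_distrib, neg_neg,
    Finset.sum_add_distrib, ← Finset.sum_div, ← Finset.sum_div, ← Finset.mul_sum,
    ← harmonicC, ← zS, mul_div_assoc, div_self hC.ne', mul_one]

lemma exp_one_le_three : Real.exp 1 ≤ 3 :=
  le_of_lt (lt_trans Real.exp_one_lt_d9 (by norm_num))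

lemma f_anti {b : ℕ} : AntitoneOn (fun x : ℝ => Real.log x / x) (Set.Icc ((3:ℕ):ℝ) b) := by
  apply Real.log_div_self_antitoneOn.mono
  intro x hx
  simp only [Set.mem_Icc, Nat.cast_ofNat] at hx
  exact le_trans exp_one_le_three hx.1

lemma hasDeriv_f {x : ℝ} (hx0 : x ≠ 0) :
    HasDerivAt (fun x : ℝ => (Real.log x)^2/2) (Real.log x / x) x := by
  have h := ((Real.hasDerivAt_log hx0).pow 2).div_const 2
  refine h.congr_deriv ?_
  field_simp
  ring

lemma integral_f {K : ℕ} (hK : 3 ≤ K) :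
    ∫ x in ((3:ℕ):ℝ)..((K:ℕ):ℝ), Real.log x / x
      = (Real.log K)^2/2 - (Real.log 3)^2/2 := by
  have h3K : ((3:ℕ):ℝ) ≤ (K:ℝ) := by exact_mod_cast hK
  rw [intervalIntegral.integral_eq_sub_of_hasDerivAt (f := fun x : ℝ => (Real.log x)^2/2)
    (fun x hx => by
      rw [Set.uIcc_of_le h3K] at hx
      have hx3 : ((3:ℕ):ℝ) ≤ x := hx.1
      have hx0 : x ≠ 0 := by push_cast at hx3; linarith
      exact hasDeriv_f hx0)
    (by
      apply ContinuousOn.intervalIntegrable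
      intro x hx
      rw [Set.uIcc_of_le h3K] at hx
      have hx3 : ((3:ℕ):ℝ) ≤ x := hx.1
      have hx0 : x ≠ 0 := by push_cast at hx3; linarith
      exact ((Real.continuousAt_log hx0).div continuousAt_id hx0).continuousWithinAt)]
  norm_num

lemma f_nonneg {i : ℕ} (hi : 1 ≤ i) : 0 ≤ Real.log i / i := by
  have h1 : (1:ℝ) ≤ i := by exact_mod_cast hi
  have := Real.log_nonneg h1
  positivity

lemma zS_lower {K : ℕ} (hK : 3 ≤ K) :
    (Real.log K)^2/2 - (Real.log 3)^2/2 ≤ zS K := by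
  have h1 := AntitoneOn.integral_le_sum_Ico (f := fun x : ℝ => Real.log x / x) hK f_anti
  rw [integral_f hK] at h1
  refine le_trans h1 ?_
  apply Finset.sum_le_sum_of_subset_of_nonneg
  · intro i hi
    rw [Finset.mem_Ico] at hi
    rw [Finset.mem_Icc]
    omega
  · intro i hi _
    rw [Finset.mem_Icc] at hi
    exact f_nonneg hi.1

lemma zS_upper {K : ℕ} (hK : 3 ≤ K) :
    zS K ≤ 2 + (Real.log K)^2/2 := by
  have h1 := AntitoneOn.sum_le_integral_Ico (f := fun x : ℝ => Real.log x / x) hK f_anti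
  rw [integral_f hK] at h1
  have hicc : Finset.Icc 1 K = Finset.Ico 1 (K+1) := (Finset.Ico_add_one_right_eq_Icc 1 K).symm
  have hsplit : zS K = (∑ i ∈ Finset.Ico (1:ℕ) 4, Real.log i / i)
      + ∑ i ∈ Finset.Ico (4:ℕ) (K+1), Real.log i / i := by
    rw [zS, hicc,
      ← Finset.sum_Ico_consecutive (fun i : ℕ => Real.log i / i)
        (show 1 ≤ 4 by omega) (show 4 ≤ K+1 by omega)]
  have hre : (∑ i ∈ Finset.Ico (4:ℕ) (K+1), Real.log i / i)
      = ∑ i ∈ Finset.Ico (3:ℕ) K, Real.log (↑(i+1)) / (↑(i+1) : ℝ) := by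
    exact (Finset.sum_Ico_add' (fun i : ℕ => Real.log i / i) 3 K 1).symm
  have hsmall : (∑ i ∈ Finset.Ico (1:ℕ) 4, Real.log i / i) ≤ 2 := by
    rw [show (4:ℕ) = 3+1 by rfl]
    rw [Finset.sum_Ico_succ_top (by omega), Finset.sum_Ico_succ_top (by omega),
      Finset.sum_Ico_succ_top (by omega)]
    simp only [Finset.Ico_self, Finset.sum_empty, zero_add]
    have l1 : Real.log 1 = 0 := Real.log_one
    have l2 : Real.log 2 ≤ 1 := by
      have := Real.log_le_sub_one_of_pos (by norm_num : (0:ℝ) < 2); linarith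
    have l3 : Real.log 3 ≤ 2 := by
      have := Real.log_le_sub_one_of_pos (by norm_num : (0:ℝ) < 3); linarith
    push_cast
    rw [l1]
    norm_num
    linarith
  have hlog3 : 0 ≤ (Real.log 3)^2/2 := by positivity
  calc zS K = _ + _ := hsplit
    _ ≤ 2 + ((Real.log K)^2/2 - (Real.log 3)^2/2) := by
        apply add_le_add hsmall
        rw [hre]; exact h1
    _ ≤ 2 + (Real.log K)^2/2 := by linarith

lemma tendsto_log_nat : Tendsto (fun K : ℕ => Real.log K) atTop atTop :=
  Real.tendsto_log_atTop.comp tendsto_natCast_atTop_atTop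

lemma tendsto_log_div_self : Tendsto (fun u : ℝ => Real.log u / u) atTop (nhds 0) :=
  Real.isLittleO_log_id_atTop.tendsto_div_nhds_zero

lemma tendsto_log_one_add_div : Tendsto (fun u : ℝ => Real.log (1 + u) / u) atTop (nhds 0) := by
  have hup : Tendsto (fun u : ℝ => Real.log 2 / u + Real.log u / u) atTop (nhds 0) := by
    have h1 : Tendsto (fun u : ℝ => Real.log 2 / u) atTop (nhds 0) :=
      tendsto_const_nhds.div_atTop tendsto_id
    simpa using h1.add tendsto_log_div_self
  apply tendsto_of_tendsto_of_tendsto_of_le_of_le' tendsto_const_nhds hup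
  · filter_upwards [eventually_ge_atTop (1:ℝ)] with u hu
    have h1u : (1:ℝ) ≤ 1 + u := by linarith
    exact div_nonneg (Real.log_nonneg h1u) (by linarith)
  · filter_upwards [eventually_ge_atTop (1:ℝ)] with u hu
    have hu0 : (0:ℝ) < u := by linarith
    have h2u : Real.log (1 + u) ≤ Real.log 2 + Real.log u := by
      rw [← Real.log_mul (by norm_num) hu0.ne']
      exact Real.log_le_log (by linarith) (by linarith)
    rw [← add_div]
    gcongr

lemma tendstoA : Tendsto (fun K : ℕ => Real.log (harmonicC K) / Real.log K) atTop (nhds 0) := by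
  have hup : Tendsto (fun K : ℕ => Real.log (1 + Real.log K) / Real.log K) atTop (nhds 0) :=
    tendsto_log_one_add_div.comp tendsto_log_nat
  apply tendsto_of_tendsto_of_tendsto_of_le_of_le' tendsto_const_nhds hup
  · filter_upwards [eventually_ge_atTop 3] with K hK
    have h1 : (1:ℝ) ≤ harmonicC K := one_le_harmonicC (by omega)
    have hK1 : (1:ℝ) < K := by exact_mod_cast (by omega : 1 < K)
    exact div_nonneg (Real.log_nonneg h1) (Real.log_pos hK1).le
  · filter_upwards [eventually_ge_atTop 3] with K hK
    have hK1 : (1:ℝ) < K := by exact_mod_cast (by omega : 1 < K)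
    have hlogK : 0 < Real.log K := Real.log_pos hK1
    have hCpos : 0 < harmonicC K := lt_of_lt_of_le one_pos (one_le_harmonicC (by omega))
    have : Real.log (harmonicC K) ≤ Real.log (1 + Real.log K) :=
      Real.log_le_log hCpos (harmonicC_le K)
    gcongr

lemma tendstoCoverlog : Tendsto (fun K : ℕ => harmonicC K / Real.log K) atTop (nhds 1) := by
  have hup : Tendsto (fun K : ℕ => (1 + Real.log K) / Real.log K) atTop (nhds 1) := by
    have h1 : Tendsto (fun K : ℕ => 1 / Real.log K + 1) atTop (nhds 1) := by
      have := ((tendsto_const_nhds (x := (1:ℝ))).div_atTop tendsto_log_nat).add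
        (tendsto_const_nhds : Tendsto (fun _ : ℕ => (1:ℝ)) atTop (nhds 1))
      simpa using this
    apply h1.congr'
    filter_upwards [eventually_ge_atTop 3] with K hK
    have hK1 : (1:ℝ) < K := by exact_mod_cast (by omega : 1 < K)
    have hlogK : Real.log K ≠ 0 := (Real.log_pos hK1).ne'
    field_simp
  apply tendsto_of_tendsto_of_tendsto_of_le_of_le' tendsto_const_nhds hup
  · filter_upwards [eventually_ge_atTop 3] with K hK
    have hK1 : (1:ℝ) < K := by exact_mod_cast (by omega : 1 < K)
    have hlogK : 0 < Real.log K := Real.log_pos hK1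
    rw [le_div_iff₀ hlogK, one_mul]
    exact (Real.log_le_log (by linarith) (by linarith : (K:ℝ) ≤ K + 1)).trans (le_harmonicC K)
  · filter_upwards [eventually_ge_atTop 3] with K hK
    have hK1 : (1:ℝ) < K := by exact_mod_cast (by omega : 1 < K)
    have hlogK : 0 < Real.log K := Real.log_pos hK1
    exact div_le_div_of_nonneg_right (harmonicC_le K) hlogK.le

lemma tendstoB : Tendsto (fun K : ℕ => Real.log K / harmonicC K) atTop (nhds 1) := by
  have := tendstoCoverlog.inv₀ one_ne_zero
  simp only [inv_div, inv_one] at this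
  exact this

lemma tendsto_inv_log_sq : Tendsto (fun K : ℕ => ((Real.log K)^2)⁻¹) atTop (nhds 0) := by
  apply Tendsto.inv_tendsto_atTop
  exact (tendsto_pow_atTop (two_ne_zero)).comp tendsto_log_nat

lemma tendstoCc : Tendsto (fun K : ℕ => zS K / (Real.log K)^2) atTop (nhds (1/2)) := by
  have hlow : Tendsto (fun K : ℕ => ((Real.log K)^2/2 - (Real.log 3)^2/2) / (Real.log K)^2)
      atTop (nhds (1/2)) := by
    have h : Tendsto (fun K : ℕ => 1/2 - (Real.log 3)^2/2 * ((Real.log K)^2)⁻¹)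
        atTop (nhds (1/2)) := by
      have := (tendsto_const_nhds (x := (1:ℝ)/2)).sub
        ((tendsto_const_nhds (x := (Real.log 3)^2/2)).mul tendsto_inv_log_sq)
      simpa using this
    apply h.congr'
    filter_upwards [eventually_ge_atTop 3] with K hK
    have hK1 : (1:ℝ) < K := by exact_mod_cast (by omega : 1 < K)
    have hlogK : Real.log K ≠ 0 := (Real.log_pos hK1).ne'
    field_simp
  have hup : Tendsto (fun K : ℕ => (2 + (Real.log K)^2/2) / (Real.log K)^2)
      atTop (nhds (1/2)) := by
    have h : Tendsto (fun K : ℕ => 2 * ((Real.log K)^2)⁻¹ + 1/2) atTop (nhds (1/2)) := by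
      have := ((tendsto_const_nhds (x := (2:ℝ))).mul tendsto_inv_log_sq).add
        (tendsto_const_nhds (x := (1:ℝ)/2))
      simpa using this
    apply h.congr'
    filter_upwards [eventually_ge_atTop 3] with K hK
    have hK1 : (1:ℝ) < K := by exact_mod_cast (by omega : 1 < K)
    have hlogK : Real.log K ≠ 0 := (Real.log_pos hK1).ne'
    field_simp
  apply tendsto_of_tendsto_of_tendsto_of_le_of_le' hlow hup
  · filter_upwards [eventually_ge_atTop 3] with K hK
    have hK1 : (1:ℝ) < K := by exact_mod_cast (by omega : 1 < K)
    have hlogK : 0 < (Real.log K)^2 := pow_pos (Real.log_pos hK1) 2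
    exact div_le_div_of_nonneg_right (zS_lower hK) hlogK.le
  · filter_upwards [eventually_ge_atTop 3] with K hK
    have hK1 : (1:ℝ) < K := by exact_mod_cast (by omega : 1 < K)
    have hlogK : 0 < (Real.log K)^2 := pow_pos (Real.log_pos hK1) 2
    exact div_le_div_of_nonneg_right (zS_upper hK) hlogK.le


/-- For the Zipf distribution, `H_K ∼ (ln K)/2` as `K → ∞`. -/
theorem zipf_entropy_asymptotics :
    Tendsto (fun K : ℕ => zipfEntropy K / Real.log (K : ℝ)) atTop (nhds (1 / 2)) := by
  have hmain : Tendsto (fun K : ℕ => Real.log (harmonicC K) / Real.log K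
      + zS K / (Real.log K)^2 * (Real.log K / harmonicC K)) atTop (nhds (0 + 1/2 * 1)) :=
    tendstoA.add (tendstoCc.mul tendstoB)
  rw [show (0:ℝ) + 1/2 * 1 = 1/2 by norm_num] at hmain
  apply hmain.congr'
  filter_upwards [eventually_ge_atTop 3] with K hK
  have hK1 : (1:ℝ) < K := by exact_mod_cast (by omega : 1 < K)
  have hlogK : Real.log K ≠ 0 := (Real.log_pos hK1).ne'
  have hC : (0:ℝ) < harmonicC K := harmonicC_pos (by omega)
  rw [entropy_eq (by omega : 1 ≤ K)]
  field_simp
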